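/- Inconsistency of the parallel timing system S₃: for the path ρ = ⟨q₁, q₂, q₃, q₁⟩, the maximum delay Δ_{P₃′}(ρ) of the flattened automaton equals 25, while Δ_{P₃}(ρ) = 24; hence Δ_{P₃′}(ρ) > Δ_{P₃}(ρ), so the consistency condition Δ_{P₃′}(ρ) ≤ Δ_{P₃}(ρ) fails for ρ. -/

import Mathlib

/-- A transition of a timed automaton: source state, alphabet symbol, destination state,
the list of timers reset (to 0) when the transition is taken, and the conjunction of
constraints `x < c` (represented as pairs `(x, c)`) that must hold for the transition
to be taken. -/
structure TTrans (A Q K : Type) where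
  src : Q
  sym : A
  dst : Q
  resets : List K
  constraints : List (K × ℝ)

/-- One step of a timed automaton with transition list `trs`, from state `q` to state `q'`,
reading symbol `a` at time `t`.  A timer valuation `v` records, for each timer, the timestamp
at which it was last reset (so the current value of timer `k` at time `t` is `t - v k`).
Every constraint `x < c` on the chosen transition must be satisfied, and the transition's
reset timers get reset time `t` in the new valuation `v'`. -/
def TStep {A Q K : Type} (trs : List (TTrans A Q K)) (q : Q) (v : K → ℝ)
    (a : A) (t : ℝ) (q' : Q) (v' : K → ℝ) : Prop :=
  ∃ tr ∈ trs, tr.src = q ∧ tr.sym = a ∧ tr.dst = q' ∧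
    (∀ c ∈ tr.constraints, t - v c.1 < c.2) ∧
    (∀ k, (k ∈ tr.resets → v' k = t) ∧ (k ∉ tr.resets → v' k = v k))

/-- `TRun trs q v w qs`: starting in state `q` with timer valuation `v`, the automaton can
read the finite timed word `w`, visiting exactly the sequence of states `qs`
(`qs` starts with `q` and has length `w.length + 1`). -/
inductive TRun {A Q K : Type} (trs : List (TTrans A Q K)) :
    Q → (K → ℝ) → List (A × ℝ) → List Q → Prop
  | nil (q : Q) (v : K → ℝ) : TRun trs q v [] [q]
  | cons {q : Q} {v : K → ℝ} {a : A} {t : ℝ} {q' : Q} {v' : K → ℝ}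
      {w : List (A × ℝ)} {qs : List Q} :
      TStep trs q v a t q' v' → TRun trs q' v' w qs →
      TRun trs q v ((a, t) :: w) (q :: qs)

/-- The timestamps of a timed word are strictly increasing. -/
def Increasing {A : Type} (w : List (A × ℝ)) : Prop :=
  w.Chain' fun p q => p.2 < q.2

/-- Timestamp of the first symbol of a timed word (0 for the empty word). -/
def firstTime {A : Type} (w : List (A × ℝ)) : ℝ := (w.map Prod.snd).headD 0

/-- Timestamp of the last symbol of a timed word (0 for the empty word). -/
def lastTime {A : Type} (w : List (A × ℝ)) : ℝ := (w.map Prod.snd).getLastD 0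

/-- The duration of a timed word: last timestamp minus first timestamp. -/
def duration {A : Type} (w : List (A × ℝ)) : ℝ := lastTime w - firstTime w

/-- A timed finite automaton: a start state, an accepting state and a finite
list of transitions. -/
structure TFA (A Q K : Type) where
  start : Q
  accept : Q
  trans : List (TTrans A Q K)

/-- A TFA accepts a (nonempty, strictly increasing) finite timed word if some run from the
start state — with all timers initially 0 at the time of the first transition — reads the
whole word and ends in the accepting state. -/
def TFA.Accepts {A Q K : Type} (M : TFA A Q K) (w : List (A × ℝ)) : Prop :=
  w ≠ [] ∧ Increasing w ∧
  ∃ qs : List Q, TRun M.trans M.start (fun _ => firstTime w) w qs ∧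
    qs.getLast? = some M.accept

/-- A timed Büchi automaton: a start state, a set of accepting states and a finite
list of transitions. -/
structure TBA (A Q K : Type) where
  start : Q
  accept : Set Q
  trans : List (TTrans A Q K)

/-- A TBA accepts an infinite timed word `(σ, τ)` (with strictly increasing timestamps)
if some infinite run from the start state — all timers 0 at the time `τ 0` of the first
transition — visits an accepting state infinitely often. -/
def TBA.Accepts {A Q K : Type} (M : TBA A Q K) (σ : ℕ → A) (τ : ℕ → ℝ) : Prop :=
  StrictMono τ ∧
  ∃ (ρ : ℕ → Q) (v : ℕ → K → ℝ),
    ρ 0 = M.start ∧ v 0 = (fun _ => τ 0) ∧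
    (∀ i, TStep M.trans (ρ i) (v i) (σ i) (τ i) (ρ (i + 1)) (v (i + 1))) ∧
    (∀ n, ∃ m, n ≤ m ∧ ρ m ∈ M.accept)

/-- `u` is a subword over the finite path `p` of TBA `M` if the transitions of `u` are taken
consecutively, traversing exactly the states of `p`, within some (finite prefix of a) run of
`M` from its start state, all timer constraints along the run being satisfied. -/
def TBA.SubwordOver {A Q K : Type} (M : TBA A Q K) (p : List Q) (u : List (A × ℝ)) : Prop :=
  ∃ (w₀ : List (A × ℝ)) (qs₀ : List Q),
    qs₀.length = w₀.length ∧
    Increasing (w₀ ++ u) ∧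
    TRun M.trans M.start (fun _ => firstTime (w₀ ++ u)) (w₀ ++ u) (qs₀ ++ p)

/-- The maximum delay `Δ_M(p)` along a path `p`: the supremum of the durations of all
subwords over `p`. -/
noncomputable def TBA.maxDelay {A Q K : Type} (M : TBA A Q K) (p : List Q) : ℝ :=
  sSup {d : ℝ | ∃ u, M.SubwordOver p u ∧ duration u = d}
/-- The alphabet {a, b, c}. -/
inductive ABC : Type
  | a | b | c
deriving DecidableEq

/-- The TBA P₃: states q₁ = 0 (start), q₂ = 1, q₃ = 2 (accepting), one timer `T`, and
transitions q₁→q₂ on `a` resetting `T`, q₂→q₃ on `b` unconstrained, q₃→q₁ on `c` with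
constraint `T < 24`. -/
def P3 : TBA ABC ℕ Unit :=
  { start := 0, accept := {2},
    trans := [⟨0, ABC.a, 1, [()], []⟩,
              ⟨1, ABC.b, 2, [], []⟩,
              ⟨2, ABC.c, 0, [], [((), 24)]⟩] }

/-- The flattened TBA P₃′: same states and labels as P₃, timers x_A = 0 and x_B = 1;
q₁→q₂ on `a` resets x_A, q₂→q₃ on `b` resets x_B, and q₃→q₁ on `c` carries the
constraint `x_A < 25 ∧ x_B < 11`. -/
def P3' : TBA ABC ℕ (Fin 2) :=
  { start := 0, accept := {2},
    trans := [⟨0, ABC.a, 1, [0], []⟩,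
              ⟨1, ABC.b, 2, [1], []⟩,
              ⟨2, ABC.c, 0, [], [(0, 25), (1, 11)]⟩] }

/-- Dropping a prefix of a run. -/
lemma trun_drop {A Q K : Type} {trs : List (TTrans A Q K)} :
    ∀ (w₀ : List (A × ℝ)) (qs₀ : List Q) (q : Q) (v : K → ℝ) {u : List (A × ℝ)} {p : List Q},
      TRun trs q v (w₀ ++ u) (qs₀ ++ p) → qs₀.length = w₀.length →
      ∃ q' v', TRun trs q' v' u p := by
  intro w₀
  induction w₀ with
  | nil =>
    intro qs₀ q v u p h hlen
    simp only [List.length_nil, List.length_eq_zero_iff] at hlen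
    subst hlen
    exact ⟨q, v, h⟩
  | cons hd tl ih =>
    intro qs₀ q v u p h hlen
    cases qs₀ with
    | nil => simp at hlen
    | cons r qs₀' =>
      obtain ⟨a, t⟩ := hd
      simp only [List.cons_append] at h
      cases h with
      | cons hstep hrun =>
        exact ih qs₀' _ _ hrun (by simpa using hlen)

lemma P3'_set :
    {d : ℝ | ∃ u, P3'.SubwordOver [0, 1, 2, 0] u ∧ duration u = d} = Set.Ioo 0 25 := by
  ext d
  constructor
  · rintro ⟨u, ⟨w₀, qs₀, hlen, hinc, hrun⟩, rfl⟩
    obtain ⟨q', v', hr⟩ := trun_drop w₀ qs₀ _ _ hrun hlen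
    have hincu : Increasing u := (List.isChain_append.mp hinc).2.1
    cases hr with
    | cons h1 hr =>
      cases hr with
      | cons h2 hr =>
        cases hr with
        | cons h3 hr =>
          cases hr with
          | cons _ hr' => cases hr'
          | nil =>
            obtain ⟨tr, htr, hsrc, -, hdst, -, hres⟩ := h1
            simp only [P3', List.mem_cons, List.not_mem_nil, or_false] at htr
            rcases htr with rfl | rfl | rfl <;> simp_all
            obtain ⟨tr, htr, hsrc, -, hdst, -, hres2⟩ := h2
            simp only [P3', List.mem_cons, List.not_mem_nil, or_false] at htr
            rcases htr with rfl | rfl | rfl <;> simp_all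
            obtain ⟨tr, htr, hsrc, -, hdst, hcon, -⟩ := h3
            simp only [P3', List.mem_cons, List.not_mem_nil, or_false] at htr
            rcases htr with rfl | rfl | rfl <;> simp_all
            obtain ⟨hc1, hc2⟩ := hcon
            have ht12 := hincu.rel_head
            have ht23 := hincu.tail.rel_head
            simp only [List.head_cons, List.tail_cons] at ht12 ht23
            simp only [duration, lastTime, firstTime, List.map_cons, List.map_nil,
              List.getLastD_cons, List.getLastD_nil, List.headD_cons, Set.mem_Ioo]
            constructor <;> linarith
  · rintro ⟨hd0, hd25⟩
    set t₂ : ℝ := max (d / 2) (d - 10) with ht₂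
    have h2pos : 0 < t₂ := lt_of_lt_of_le (by linarith) (le_max_left _ _)
    have h2lt : t₂ < d := max_lt (by linarith) (by linarith)
    have h2ge : d - 10 ≤ t₂ := le_max_right _ _
    refine ⟨[(ABC.a, 0), (ABC.b, t₂), (ABC.c, d)], ⟨[], [], rfl, ?_, ?_⟩, ?_⟩
    · simp [Increasing, List.Chain', List.isChain_cons_cons]
      exact ⟨h2pos, h2lt⟩
    · simp only [List.nil_append]
      have hft : firstTime [(ABC.a, (0:ℝ)), (ABC.b, t₂), (ABC.c, d)] = 0 := by
        simp [firstTime]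
      rw [hft]
      refine TRun.cons (q' := 1) (v' := fun _ => (0:ℝ)) ?_ ?_
      · exact ⟨⟨0, ABC.a, 1, [0], []⟩, by simp [P3'], rfl, rfl, rfl, by simp,
          fun k => ⟨fun _ => rfl, fun _ => rfl⟩⟩
      refine TRun.cons (q' := 2) (v' := fun k => if k = 1 then t₂ else 0) ?_ ?_
      · refine ⟨⟨1, ABC.b, 2, [1], []⟩, by simp [P3'], rfl, rfl, rfl, by simp, fun k => ⟨?_, ?_⟩⟩
        · intro hk; simp at hk; simp [hk]
        · intro hk; simp at hk; simp [hk]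
      refine TRun.cons (q' := 0) (v' := fun k => if k = 1 then t₂ else 0) ?_ (TRun.nil _ _)
      · refine ⟨⟨2, ABC.c, 0, [], [(0, 25), (1, 11)]⟩, by simp [P3'], rfl, rfl, rfl, ?_,
          fun k => ⟨fun hk => by simp at hk, fun _ => rfl⟩⟩
        intro c hc
        simp at hc
        rcases hc with rfl | rfl <;> simp <;> linarith
    · simp [duration, lastTime, firstTime]

lemma P3_set :
    {d : ℝ | ∃ u, P3.SubwordOver [0, 1, 2, 0] u ∧ duration u = d} = Set.Ioo 0 24 := by
  ext d
  constructor
  · rintro ⟨u, ⟨w₀, qs₀, hlen, hinc, hrun⟩, rfl⟩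
    obtain ⟨q', v', hr⟩ := trun_drop w₀ qs₀ _ _ hrun hlen
    have hincu : Increasing u := (List.isChain_append.mp hinc).2.1
    cases hr with
    | cons h1 hr =>
      cases hr with
      | cons h2 hr =>
        cases hr with
        | cons h3 hr =>
          cases hr with
          | cons _ hr' => cases hr'
          | nil =>
            obtain ⟨tr, htr, hsrc, -, hdst, -, hres⟩ := h1
            simp only [P3, List.mem_cons, List.not_mem_nil, or_false] at htr
            rcases htr with rfl | rfl | rfl <;> simp_all
            obtain ⟨tr, htr, hsrc, -, hdst, -, hres2⟩ := h2
            simp only [P3, List.mem_cons, List.not_mem_nil, or_false] at htr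
            rcases htr with rfl | rfl | rfl <;> simp_all
            obtain ⟨tr, htr, hsrc, -, hdst, hcon, -⟩ := h3
            simp only [P3, List.mem_cons, List.not_mem_nil, or_false] at htr
            rcases htr with rfl | rfl | rfl <;> simp_all
            have hc1 := hcon
            have ht12 := hincu.rel_head
            have ht23 := hincu.tail.rel_head
            simp only [List.head_cons, List.tail_cons] at ht12 ht23
            simp only [duration, lastTime, firstTime, List.map_cons, List.map_nil,
              List.getLastD_cons, List.getLastD_nil, List.headD_cons, Set.mem_Ioo]
            constructor <;> linarith
  · rintro ⟨hd0, hd24⟩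
    refine ⟨[(ABC.a, 0), (ABC.b, d / 2), (ABC.c, d)], ⟨[], [], rfl, ?_, ?_⟩, ?_⟩
    · have h1 : (0:ℝ) < d / 2 := by linarith
      have h2 : d / 2 < d := by linarith
      simp [Increasing, List.Chain', List.isChain_cons_cons, h1, h2]
    · simp only [List.nil_append]
      have hft : firstTime [(ABC.a, (0:ℝ)), (ABC.b, d / 2), (ABC.c, d)] = 0 := by
        simp [firstTime]
      rw [hft]
      refine TRun.cons (q' := 1) (v' := fun _ => (0:ℝ)) ?_ ?_
      · exact ⟨⟨0, ABC.a, 1, [()], []⟩, by simp [P3], rfl, rfl, rfl, by simp,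
          fun k => ⟨fun _ => rfl, fun _ => rfl⟩⟩
      refine TRun.cons (q' := 2) (v' := fun _ => (0:ℝ)) ?_ ?_
      · exact ⟨⟨1, ABC.b, 2, [], []⟩, by simp [P3], rfl, rfl, rfl, by simp,
          fun k => ⟨fun hk => by simp at hk, fun _ => rfl⟩⟩
      refine TRun.cons (q' := 0) (v' := fun _ => (0:ℝ)) ?_ (TRun.nil _ _)
      · refine ⟨⟨2, ABC.c, 0, [], [((), 24)]⟩, by simp [P3], rfl, rfl, rfl, ?_,
          fun k => ⟨fun hk => by simp at hk, fun _ => rfl⟩⟩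
        intro c hc
        simp at hc
        subst hc
        simp
        linarith
    · simp [duration, lastTime, firstTime]

/-- Inconsistency of the parallel timing system S₃: for the path ρ = ⟨q₁,q₂,q₃,q₁⟩,
Δ_{P₃′}(ρ) = 25 while Δ_{P₃}(ρ) = 24, hence Δ_{P₃′}(ρ) > Δ_{P₃}(ρ) and the consistency
condition Δ_{P₃′}(ρ) ≤ Δ_{P₃}(ρ) fails. -/
theorem S3_inconsistent :
    P3'.maxDelay [0, 1, 2, 0] = 25 ∧ P3.maxDelay [0, 1, 2, 0] = 24 ∧
    P3.maxDelay [0, 1, 2, 0] < P3'.maxDelay [0, 1, 2, 0] ∧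
    ¬ P3'.maxDelay [0, 1, 2, 0] ≤ P3.maxDelay [0, 1, 2, 0] := by
  have h1 : P3'.maxDelay [0, 1, 2, 0] = 25 := by
    rw [TBA.maxDelay, P3'_set]; exact csSup_Ioo (by norm_num)
  have h2 : P3.maxDelay [0, 1, 2, 0] = 24 := by
    rw [TBA.maxDelay, P3_set]; exact csSup_Ioo (by norm_num)
  refine ⟨h1, h2, ?_, ?_⟩ <;> rw [h1, h2] <;> norm_num
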